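/- If $f : [0,1]^k \to \mathbb{R}$ has a continuous mixed partial derivative $D f = \partial^k f/\partial x_1\cdots\partial x_k$, then for every box $[\mathbf{x},\mathbf{y}]$ with $\mathbf{x} \le \mathbf{y}$ there exists $\mathbf{c} \in [\mathbf{x},\mathbf{y}]$ such that $\square^k_{\mathbf{x},\mathbf{y}} f = (Df)(\mathbf{c}) \cdot \prod_{i=1}^k (y_i - x_i)$ (a mean value theorem for rectangular increments). -/

import Mathlib

open scoped BigOperators
open MeasureTheory

noncomputable section

/-- The corner of the box `[x,y]` selecting `x i` for `i ∈ S` and `y i` otherwise. -/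
def corner {k : ℕ} (x y : Fin k → ℝ) (S : Finset (Fin k)) : Fin k → ℝ :=
  fun i => if i ∈ S then x i else y i

/-- Rectangular (generalized) increment `□^k_{x,y} f = ∏ (I - V_{i,x}) f(y)`. -/
def boxInc {k : ℕ} (f : (Fin k → ℝ) → ℝ) (x y : Fin k → ℝ) : ℝ :=
  ∑ S : Finset (Fin k), (-1 : ℝ) ^ S.card * f (corner x y S)

/-- Membership in the box `[a,b]`. -/
def inBox {k : ℕ} (a b x : Fin k → ℝ) : Prop := ∀ i, a i ≤ x i ∧ x i ≤ b i

/-- Membership in `[0,1]^k`. -/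
def box01 {k : ℕ} (x : Fin k → ℝ) : Prop := ∀ i, 0 ≤ x i ∧ x i ≤ 1

/-- `q_γ(x,y) = ∏_i |y_i - x_i|^{γ_i}`. -/
def qfun {k : ℕ} (γ x y : Fin k → ℝ) : ℝ := ∏ i, |y i - x i| ^ γ i

/-- `p_γ(x,y) = ∑_i |y_i - x_i|^{γ_i}`. -/
def pfun {k : ℕ} (γ x y : Fin k → ℝ) : ℝ := ∑ i, |y i - x i| ^ γ i

/-- Substitute the `i`-th coordinate of `x` by `z i`. -/
def substP {k : ℕ} (i : Fin k) (z x : Fin k → ℝ) : Fin k → ℝ := Function.update x i (z i)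

/-- The shuffle operator `ψ_i(z)`. -/
def psiOp {k : ℕ} (i : Fin k) (z : Fin k → ℝ) (F : (Fin k → ℝ) → (Fin k → ℝ) → ℝ) :
    (Fin k → ℝ) → (Fin k → ℝ) → ℝ :=
  fun x y => F x (substP i z y) + F (substP i z x) y

/-- The one-variable Chen operator `δ^{(i)}_z = I - ψ_i(z)`. -/
def deltaOne {k : ℕ} (i : Fin k) (z : Fin k → ℝ) (F : (Fin k → ℝ) → (Fin k → ℝ) → ℝ) :
    (Fin k → ℝ) → (Fin k → ℝ) → ℝ :=
  fun x y => F x y - F x (substP i z y) - F (substP i z x) y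

/-- The full Chen operator `δ^θ_z = ∏_{i=1}^k (I - ψ_i(z))` for `θ = {1,…,k}`. -/
def deltaFull {k : ℕ} (z : Fin k → ℝ) (F : (Fin k → ℝ) → (Fin k → ℝ) → ℝ) :
    (Fin k → ℝ) → (Fin k → ℝ) → ℝ :=
  (List.finRange k).foldr (fun i G => deltaOne i z G) F

/-- Set of ratios for the rectangular-increment Hölder seminorm on the box `[a,b]`. -/
def boxRatioSet {k : ℕ} (α : Fin k → ℝ) (f : (Fin k → ℝ) → ℝ) (a b : Fin k → ℝ) : Set ℝ :=
  {r | ∃ x y, inBox a b x ∧ inBox a b y ∧ (∀ i, x i ≠ y i) ∧ r = |boxInc f x y| / qfun α x y}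

/-- Rectangular-increment Hölder seminorm `‖f‖_{α,□,[a,b]}`. -/
def boxSemi {k : ℕ} (α : Fin k → ℝ) (f : (Fin k → ℝ) → ℝ) (a b : Fin k → ℝ) : ℝ :=
  sSup (boxRatioSet α f a b)

/-- Set of ratios for the directional Hölder seminorm in direction `i`. -/
def dirRatioSet {k : ℕ} (i : Fin k) (αi : ℝ) (f : (Fin k → ℝ) → ℝ) (a b : Fin k → ℝ) :
    Set ℝ :=
  {r | ∃ x, inBox a b x ∧ ∃ u v : ℝ, a i ≤ u ∧ u ≤ b i ∧ a i ≤ v ∧ v ≤ b i ∧ u ≠ v ∧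
    r = |f (Function.update x i v) - f (Function.update x i u)| / |v - u| ^ αi}

/-- Directional Hölder seminorm `sup_x ‖f_{x,i}‖_{α_i}`. -/
def dirSemi {k : ℕ} (i : Fin k) (αi : ℝ) (f : (Fin k → ℝ) → ℝ) (a b : Fin k → ℝ) : ℝ :=
  sSup (dirRatioSet i αi f a b)

/-- `‖f‖_{α,+,[a,b]} = ∑_i sup_x ‖f_{x,i}‖_{α_i}`. -/
def dirSum {k : ℕ} (α : Fin k → ℝ) (f : (Fin k → ℝ) → ℝ) (a b : Fin k → ℝ) : ℝ :=
  ∑ i, dirSemi i (α i) f a b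

/-- The multiparameter Hölder seminorm `‖f‖_{α,[a,b]}`. -/
def holderNorm {k : ℕ} (α : Fin k → ℝ) (f : (Fin k → ℝ) → ℝ) (a b : Fin k → ℝ) : ℝ :=
  boxSemi α f a b + dirSum α f a b

/-- Membership in the multiparameter Hölder space on `[a,b]` (finiteness of `‖f‖_{α,[a,b]}`). -/
def MemHolderField {k : ℕ} (α : Fin k → ℝ) (f : (Fin k → ℝ) → ℝ) (a b : Fin k → ℝ) : Prop :=
  ∃ C : ℝ, (∀ x y, inBox a b x → inBox a b y → |boxInc f x y| ≤ C * qfun α x y) ∧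
    (∀ (i : Fin k) x (u v : ℝ), inBox a b x → a i ≤ u → u ≤ b i → a i ≤ v → v ≤ b i →
      |f (Function.update x i v) - f (Function.update x i u)| ≤ C * |v - u| ^ (α i))

/-- Grid Riemann sum of `Ξ` over the grid-like partition `P`. -/
def gridSum {k : ℕ} (Ξ : (Fin k → ℝ) → (Fin k → ℝ) → ℝ) {n : Fin k → ℕ}
    (P : ∀ i, Fin (n i + 1) → ℝ) : ℝ :=
  ∑ c : (∀ i, Fin (n i)), Ξ (fun i => P i (c i).castSucc) (fun i => P i (c i).succ)

/-- `P` is a grid-like partition of the box `[x,y]`. -/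
def IsPartition {k : ℕ} (x y : Fin k → ℝ) {n : Fin k → ℕ}
    (P : ∀ i, Fin (n i + 1) → ℝ) : Prop :=
  ∀ i, Monotone (P i) ∧ P i 0 = x i ∧ P i (Fin.last (n i)) = y i

/-- The mesh of the partition `P` is smaller than `δ`. -/
def MeshLt {k : ℕ} {n : Fin k → ℕ} (P : ∀ i, Fin (n i + 1) → ℝ) (δ : ℝ) : Prop :=
  ∀ i (j : Fin (n i)), P i j.succ - P i j.castSucc < δ

/-- `I` is the limit of the grid Riemann sums of `Ξ` over `[x,y]` as the mesh tends to `0`. -/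
def IsGridLimit {k : ℕ} (Ξ : (Fin k → ℝ) → (Fin k → ℝ) → ℝ) (x y : Fin k → ℝ) (I : ℝ) :
    Prop :=
  ∀ ε > (0:ℝ), ∃ δ > (0:ℝ), ∀ (n : Fin k → ℕ) (P : ∀ i, Fin (n i + 1) → ℝ),
    IsPartition x y P → MeshLt P δ → |gridSum Ξ P - I| ≤ ε

end

noncomputable section

/-- Partial derivative of `g` in coordinate `i`. -/
def pd {k : ℕ} (i : Fin k) (g : (Fin k → ℝ) → ℝ) : (Fin k → ℝ) → ℝ :=
  fun x => deriv (fun t => g (Function.update x i t)) (x i)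

/-- Iterated partial derivatives of `f` along the list of coordinates `l`. -/
def mixedAlong {k : ℕ} (l : List (Fin k)) (f : (Fin k → ℝ) → ℝ) : (Fin k → ℝ) → ℝ :=
  l.foldr pd f

/-- The mixed partial derivative `∂^k f / ∂x_1 ⋯ ∂x_k`. -/
def mixedDeriv {k : ℕ} (f : (Fin k → ℝ) → ℝ) : (Fin k → ℝ) → ℝ :=
  mixedAlong (List.finRange k) f

/-- The iterated integral `∫_{x_1}^{y_1} ⋯ ∫_{x_k}^{y_k} g(z) dz_k ⋯ dz_1`. -/
def iterInt : {k : ℕ} → ((Fin k → ℝ) → ℝ) → (Fin k → ℝ) → (Fin k → ℝ) → ℝ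
  | 0, g, _, _ => g (fun i => i.elim0)
  | _ + 1, g, x, y =>
      ∫ t in (x 0)..(y 0),
        iterInt (fun z => g (Fin.cons t z)) (fun i => x i.succ) (fun i => y i.succ)

end

noncomputable section MVTAux

/-- Partial rectangular increment over the coordinates in the list `l`. -/
def boxIncOn {k : ℕ} : List (Fin k) → ((Fin k → ℝ) → ℝ) → (Fin k → ℝ) → (Fin k → ℝ) → ℝ
  | [], g, _, y => g y
  | a :: l, g, x, y =>
      boxIncOn l g x y - boxIncOn l g x (Function.update y a (x a))

lemma corner_update_self {k : ℕ} (x y : Fin k → ℝ) (a : Fin k) (S : Finset (Fin k))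
    (ha : a ∉ S) :
    corner x (Function.update y a (x a)) S = corner x y (insert a S) := by
  funext j
  rcases eq_or_ne j a with rfl | hj
  · simp [corner, ha]
  · simp [corner, Function.update_of_ne hj, Finset.mem_insert, hj]

lemma corner_update {k : ℕ} (x y : Fin k → ℝ) (i : Fin k) (t : ℝ) (S : Finset (Fin k))
    (hi : i ∉ S) :
    corner x (Function.update y i t) S = Function.update (corner x y S) i t := by
  funext j
  rcases eq_or_ne j i with rfl | hj
  · simp [corner, hi]
  · simp [corner, Function.update_of_ne hj]

lemma boxIncOn_eq_sum {k : ℕ} (g : (Fin k → ℝ) → ℝ) (x : Fin k → ℝ) :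
    ∀ (l : List (Fin k)), l.Nodup → ∀ y,
      boxIncOn l g x y = ∑ S ∈ l.toFinset.powerset, (-1 : ℝ) ^ S.card * g (corner x y S) := by
  intro l
  induction l with
  | nil =>
      intro _ y
      have : corner x y (∅ : Finset (Fin k)) = y := by funext j; simp [corner]
      simp [boxIncOn, this]
  | cons a l ih =>
      intro hnd y
      have ha : a ∉ l := (List.nodup_cons.mp hnd).1
      have hnd' : l.Nodup := (List.nodup_cons.mp hnd).2
      have haf : a ∉ l.toFinset := by simpa using ha
      rw [boxIncOn, ih hnd' y, ih hnd' (Function.update y a (x a))]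
      rw [List.toFinset_cons, Finset.sum_powerset_insert haf]
      have : ∀ S ∈ l.toFinset.powerset,
          (-1 : ℝ) ^ S.card * g (corner x (Function.update y a (x a)) S)
            = -((-1 : ℝ) ^ (insert a S).card * g (corner x y (insert a S))) := by
        intro S hS
        have haS : a ∉ S := fun h => haf (Finset.mem_powerset.mp hS h)
        rw [corner_update_self x y a S haS, Finset.card_insert_of_notMem haS]
        ring
      rw [Finset.sum_congr rfl this]
      simp [sub_eq_add_neg, Finset.sum_neg_distrib]

lemma boxInc_eq_boxIncOn {k : ℕ} (g : (Fin k → ℝ) → ℝ) (x y : Fin k → ℝ) :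
    boxInc g x y = boxIncOn (List.finRange k) g x y := by
  rw [boxIncOn_eq_sum g x (List.finRange k) (List.nodup_finRange k) y]
  rw [boxInc]
  simp [List.toFinset_finRange, Finset.powerset_univ]

lemma boxIncOn_append_singleton {k : ℕ} (g : (Fin k → ℝ) → ℝ) (x : Fin k → ℝ) (i : Fin k) :
    ∀ (l : List (Fin k)), i ∉ l → ∀ y,
      boxIncOn (l ++ [i]) g x y
        = boxIncOn l g x y - boxIncOn l g x (Function.update y i (x i)) := by
  intro l
  induction l with
  | nil => intro _ y; simp [boxIncOn]
  | cons a l ih =>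
      intro hi y
      have hai : a ≠ i := fun h => hi (h ▸ (show a ∈ a :: l from List.mem_cons_self))
      have hil : i ∉ l := fun h => hi (List.mem_cons_of_mem a h)
      show boxIncOn (l ++ [i]) g x y - boxIncOn (l ++ [i]) g x (Function.update y a (x a)) = _
      rw [ih hil y, ih hil (Function.update y a (x a)),
        Function.update_comm hai (x a) (x i) y]
      show _ = (boxIncOn l g x y - boxIncOn l g x (Function.update y a (x a)))
          - (boxIncOn l g x (Function.update y i (x i))
            - boxIncOn l g x (Function.update (Function.update y i (x i)) a (x a)))
      ring

lemma mixedAlong_append {k : ℕ} (l m : List (Fin k)) (f : (Fin k → ℝ) → ℝ) :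
    mixedAlong (l ++ m) f = mixedAlong l (mixedAlong m f) := by
  simp [mixedAlong, List.foldr_append]

/-- Key inductive mean value lemma. -/
lemma boxIncOn_mean_value {k : ℕ} (f : (Fin k → ℝ) → ℝ)
    (hd : ∀ l : List (Fin k), l.Sublist (List.finRange k) →
      ∀ (i : Fin k) (w : Fin k → ℝ),
        DifferentiableAt ℝ (fun t => mixedAlong l f (Function.update w i t)) (w i)) :
    ∀ (l : List (Fin k)), ∀ m : List (Fin k), (l ++ m).Sublist (List.finRange k) →
      ∀ x y : Fin k → ℝ, (∀ j, x j ≤ y j) →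
      ∃ c : Fin k → ℝ, (∀ j, x j ≤ c j ∧ c j ≤ y j) ∧ (∀ j, j ∉ l → c j = y j) ∧
        boxIncOn l (mixedAlong m f) x y
          = mixedAlong (l ++ m) f c * (l.map (fun j => y j - x j)).prod := by
  intro l
  induction l using List.reverseRecOn with
  | nil =>
      intro m hsub x y hxy
      refine ⟨y, fun j => ⟨hxy j, le_rfl⟩, fun _ _ => rfl, ?_⟩
      simp [boxIncOn]
  | append_singleton l i IH =>
      intro m hsub x y hxy
      have hnd : ((l ++ [i]) ++ m).Nodup := hsub.nodup (List.nodup_finRange k)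
      have h1 : (l ++ [i]).Nodup := hnd.of_append_left
      have hndl : l.Nodup := h1.of_append_left
      have hil : i ∉ l := by
        rw [List.nodup_append] at h1
        intro h
        exact h1.2.2 i h i (by simp) rfl
      have hm : m.Sublist (List.finRange k) :=
        (List.sublist_append_right (l ++ [i]) m).trans hsub
      have hsub' : (l ++ i :: m).Sublist (List.finRange k) := by
        have e : (l ++ [i]) ++ m = l ++ i :: m := by simp
        rwa [e] at hsub
      have hiS : ∀ S ∈ l.toFinset.powerset, i ∉ S := by
        intro S hS hiS'
        exact hil (List.mem_toFinset.mp (Finset.mem_powerset.mp hS hiS'))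
      set φ : ℝ → ℝ := fun t => ∑ S ∈ l.toFinset.powerset,
        (-1 : ℝ) ^ S.card * mixedAlong m f (Function.update (corner x y S) i t) with hφdef
      set D : ℝ → ℝ := fun t => ∑ S ∈ l.toFinset.powerset,
        (-1 : ℝ) ^ S.card * pd i (mixedAlong m f) (Function.update (corner x y S) i t)
        with hDdef
      have hφ : ∀ t, boxIncOn l (mixedAlong m f) x (Function.update y i t) = φ t := by
        intro t
        rw [hφdef, boxIncOn_eq_sum (mixedAlong m f) x l hndl (Function.update y i t)]
        refine Finset.sum_congr rfl fun S hS => ?_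
        rw [corner_update x y i t S (hiS S hS)]
      have hD : ∀ t, boxIncOn l (pd i (mixedAlong m f)) x (Function.update y i t) = D t := by
        intro t
        rw [hDdef, boxIncOn_eq_sum (pd i (mixedAlong m f)) x l hndl (Function.update y i t)]
        refine Finset.sum_congr rfl fun S hS => ?_
        rw [corner_update x y i t S (hiS S hS)]
      have hder : ∀ t, HasDerivAt φ (D t) t := by
        intro t
        rw [hφdef, hDdef]
        apply HasDerivAt.fun_sum
        intro S _
        apply HasDerivAt.const_mul
        have h1' := (hd m hm i (Function.update (corner x y S) i t)).hasDerivAt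
        have efun : (fun s => mixedAlong m f
              (Function.update (Function.update (corner x y S) i t) i s))
            = fun s => mixedAlong m f (Function.update (corner x y S) i s) := by
          funext s; rw [Function.update_idem]
        have ept : Function.update (corner x y S) i t i = t :=
          Function.update_self i t (corner x y S)
        rw [efun, ept] at h1'
        have hval : pd i (mixedAlong m f) (Function.update (corner x y S) i t)
            = deriv (fun s => mixedAlong m f (Function.update (corner x y S) i s)) t := by
          show deriv (fun s => mixedAlong m f
              (Function.update (Function.update (corner x y S) i t) i s))
              (Function.update (corner x y S) i t i) = _
          rw [efun, ept]
        rw [hval]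
        exact h1'
      have hpeel : boxIncOn (l ++ [i]) (mixedAlong m f) x y = φ (y i) - φ (x i) := by
        rw [boxIncOn_append_singleton (mixedAlong m f) x i l hil y, hφ (x i)]
        have hy := hφ (y i)
        rw [Function.update_eq_self] at hy
        rw [hy]
      rcases eq_or_lt_of_le (hxy i) with he | hlt
      · refine ⟨y, fun j => ⟨hxy j, le_rfl⟩, fun _ _ => rfl, ?_⟩
        have hz : y i - x i = 0 := by rw [he, sub_self]
        rw [hpeel, he, sub_self]
        simp [List.map_append, List.prod_append, hz]
      · obtain ⟨ξ, hξIoo, hξ⟩ := exists_hasDerivAt_eq_slope φ D hlt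
          (fun t _ => (hder t).continuousAt.continuousWithinAt) (fun t _ => hder t)
        have hne : y i - x i ≠ 0 := sub_ne_zero.mpr (ne_of_gt hlt)
        have hξ1 : x i ≤ ξ := le_of_lt hξIoo.1
        have hξ2 : ξ ≤ y i := le_of_lt hξIoo.2
        have hxy' : ∀ j, x j ≤ Function.update y i ξ j := by
          intro j
          rcases eq_or_ne j i with rfl | hj
          · simpa using hξ1
          · simpa [Function.update_of_ne hj] using hxy j
        obtain ⟨c, hc1, hc2, hc3⟩ := IH (i :: m) hsub' x (Function.update y i ξ) hxy'
        refine ⟨c, ?_, ?_, ?_⟩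
        · intro j
          refine ⟨(hc1 j).1, le_trans (hc1 j).2 ?_⟩
          rcases eq_or_ne j i with rfl | hj
          · simpa using hξ2
          · simp [Function.update_of_ne hj]
        · intro j hj
          have hjl : j ∉ l := fun h => hj (List.mem_append.mpr (Or.inl h))
          have hji : j ≠ i := fun h => hj (by simp [h])
          rw [hc2 j hjl, Function.update_of_ne hji]
        · have hprodl : (l.map (fun j => Function.update y i ξ j - x j)).prod
              = (l.map (fun j => y j - x j)).prod := by
            congr 1
            apply List.map_congr_left
            intro j hj
            have hji : j ≠ i := by rintro rfl; exact hil hj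
            rw [Function.update_of_ne hji]
          have hDξ : D ξ = boxIncOn l (pd i (mixedAlong m f)) x (Function.update y i ξ) :=
            (hD ξ).symm
          calc boxIncOn (l ++ [i]) (mixedAlong m f) x y
              = φ (y i) - φ (x i) := hpeel
            _ = D ξ * (y i - x i) := by rw [hξ, div_mul_cancel₀ _ hne]
            _ = (mixedAlong (l ++ i :: m) f c * (l.map (fun j => y j - x j)).prod)
                  * (y i - x i) := by
                rw [hDξ, show pd i (mixedAlong m f) = mixedAlong (i :: m) f from rfl,
                  hc3, hprodl]
            _ = mixedAlong ((l ++ [i]) ++ m) f c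
                  * ((l ++ [i]).map (fun j => y j - x j)).prod := by
                rw [show (l ++ [i]) ++ m = l ++ i :: m from by simp]
                simp [List.map_append, List.prod_append]
                ring

end MVTAux

/-- Mean value theorem for rectangular increments: if `f` has a continuous mixed partial
derivative `Df`, then for every box `[x,y]` there is `c ∈ [x,y]` with
`□^k_{x,y} f = Df(c) ⬝ ∏_i (y_i - x_i)`. -/
theorem boxInc_mean_value {k : ℕ} (f : (Fin k → ℝ) → ℝ)
    (hd : ∀ l : List (Fin k), l.Sublist (List.finRange k) →
      ∀ (i : Fin k) (w : Fin k → ℝ),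
        DifferentiableAt ℝ (fun t => mixedAlong l f (Function.update w i t)) (w i))
    (hc : Continuous (mixedDeriv f)) :
    ∀ x y : Fin k → ℝ, box01 x → box01 y → (∀ i, x i ≤ y i) →
      ∃ c : Fin k → ℝ, inBox x y c ∧
        boxInc f x y = mixedDeriv f c * ∏ i, (y i - x i) := by
  intro x y _ _ hxy
  obtain ⟨c, hc1, _, hc3⟩ :=
    boxIncOn_mean_value f hd (List.finRange k) [] (by simp) x y hxy
  refine ⟨c, fun j => hc1 j, ?_⟩
  rw [boxInc_eq_boxIncOn]
  have hc3' : boxIncOn (List.finRange k) f x y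
      = mixedAlong (List.finRange k ++ []) f c
        * (List.map (fun j => y j - x j) (List.finRange k)).prod := hc3
  rw [hc3', Fin.prod_univ_def]
  simp [mixedDeriv]
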